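/- Let μ = i₁i₂⋯i_r and ν = j₁j₂⋯j_s with r, s ≥ 1, where i₁ ≥ i₂ ≥ ⋯ ≥ i_r and j₁ ≥ j₂ ≥ ⋯ ≥ j_s are Lyndon words. Suppose that each of i₁ and j₁ contains at most two occurrences of its first letter. Then the lexicographically greatest shuffle w of μ and ν is either of the form w = i₁ ⬝ w′ for some shuffle w′ of i₂⋯i_r and ν, or of the form w = j₁ ⬝ w″ for some shuffle w″ of μ and j₂⋯j_s. -/

import Mathlib

/-- `IsShuffle μ ν w` means that `w` is an interleaving (shuffle) of the words `μ` and `ν`. -/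
inductive IsShuffle {α : Type*} : List α → List α → List α → Prop
  | nil : IsShuffle [] [] []
  | left {a : α} {μ ν w : List α} : IsShuffle μ ν w → IsShuffle (a :: μ) ν (a :: w)
  | right {a : α} {μ ν w : List α} : IsShuffle μ ν w → IsShuffle μ (a :: ν) (a :: w)

/-- A nonempty word `u` is a Lyndon word if it is lexicographically strictly smaller than
every proper nonempty suffix of itself. -/
def IsLyndon {α : Type*} [LinearOrder α] (u : List α) : Prop :=
  u ≠ [] ∧ ∀ v : List α, v ≠ [] → v ≠ u → v <:+ u → u < v

namespace Stmt4Aux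

set_option linter.unusedSectionVars false
set_option linter.unusedVariables false

variable {α : Type*} [LinearOrder α]

lemma le_nil' {x : List α} (h : x ≤ []) : x = [] := by
  rcases le_iff_lt_or_eq.mp h with h | h
  · exact absurd h (List.not_lt_nil _)
  · exact h

lemma cons_lt_cons_of_head_lt {a b : α} {x y : List α} (h : a < b) : a :: x < b :: y :=
  List.Lex.rel h

lemma cons_le_cons_inv {a b : α} {x y : List α} (h : a :: x ≤ b :: y) :
    a < b ∨ (a = b ∧ x ≤ y) := by
  rcases le_iff_lt_or_eq.mp h with h | h
  · cases h with
    | rel h => exact Or.inl h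
    | cons h => exact Or.inr ⟨rfl, le_of_lt h⟩
  · injection h with h1 h2; exact Or.inr ⟨h1, le_of_eq h2⟩

lemma append_lt_append {x y : List α} (hxy : x < y) (hpre : ¬ x <+: y) :
    ∀ s t : List α, x ++ s < y ++ t := by
  induction hxy with
  | nil => exact fun s t => absurd (List.nil_prefix) (by assumption)
  | @cons a l₁ l₂ h ih =>
    intro s t
    exact List.Lex.cons (ih (fun hp => hpre (List.cons_prefix_cons.mpr ⟨rfl, hp⟩)) s t)
  | rel h => exact fun s t => List.Lex.rel h

lemma shuffle_append (u v : List α) : IsShuffle u v (u ++ v) := by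
  induction u with
  | nil =>
    induction v with
    | nil => exact .nil
    | cons b v ih => exact .right ih
  | cons a u ih => exact .left ih

lemma shuffle_swap {u v w : List α} (h : IsShuffle u v w) : IsShuffle v u w := by
  induction h with
  | nil => exact .nil
  | left _ ih => exact .right ih
  | right _ ih => exact .left ih

lemma shuffle_prepend (p : List α) {u v w : List α} (h : IsShuffle u v w) :
    IsShuffle (p ++ u) v (p ++ w) := by
  induction p with
  | nil => exact h
  | cons a p ih => exact .left ih

/-- Key exchange lemma: if `x ≤ y`, then any shuffle of `p ++ y` and `x` is dominated by
some shuffle of `y` and `p ++ x`. -/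
lemma exchange : ∀ {A x s : List α}, IsShuffle A x s →
    ∀ p y, A = p ++ y → x ≤ y → ∃ t, IsShuffle y (p ++ x) t ∧ s ≤ t := by
  intro A x s h
  induction h with
  | nil =>
    intro p y hA hxy
    obtain ⟨rfl, rfl⟩ := List.append_eq_nil_iff.mp hA.symm
    exact ⟨[], .nil, le_refl _⟩
  | @left a μ ν w h ih =>
    intro p y hA hxy
    cases p with
    | nil =>
      simp only [List.nil_append] at hA ⊢
      exact ⟨a :: w, hA ▸ IsShuffle.left h, le_refl _⟩
    | cons a' p' =>
      simp only [List.cons_append] at hA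
      injection hA with h1 h2
      subst h1
      obtain ⟨t, ht, hst⟩ := ih p' y h2 hxy
      exact ⟨a :: t, .right ht, List.cons_le_cons a hst⟩
  | @right c μ ν' w h ih =>
    intro p y hA hxy
    cases y with
    | nil => exact absurd (le_nil' hxy) (by simp)
    | cons d y' =>
      rcases cons_le_cons_inv hxy with hlt | ⟨rfl, hle⟩
      · exact ⟨d :: (y' ++ (p ++ c :: ν')), .left (shuffle_append _ _),
          le_of_lt (cons_lt_cons_of_head_lt hlt)⟩
      · obtain ⟨t, ht, hst⟩ := ih (p ++ [c]) y'
          (by rw [hA, List.append_assoc]; rfl) hle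
        rw [List.append_assoc] at ht
        exact ⟨c :: t, .left ht, List.cons_le_cons c hst⟩

/-- Greedy step: if `v ≤ a :: u'`, any shuffle of `a :: u'` and `v` is dominated by
`a :: s₂` for some shuffle `s₂` of `u'` and `v`. -/
lemma greedy {a : α} {u' v s : List α} (hvu : v ≤ a :: u') (hs : IsShuffle (a :: u') v s) :
    ∃ s₂, IsShuffle u' v s₂ ∧ s ≤ a :: s₂ := by
  cases hs with
  | left h => exact ⟨_, h, le_refl _⟩
  | @right b _ v' w h =>
    rcases cons_le_cons_inv hvu with hlt | ⟨rfl, hle⟩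
    · exact ⟨u' ++ (b :: v'), shuffle_append _ _, le_of_lt (cons_lt_cons_of_head_lt hlt)⟩
    · obtain ⟨t, ht, hwt⟩ := exchange h [b] u' rfl hle
      exact ⟨t, ht, List.cons_le_cons b hwt⟩

/-- If `v ≤ i ++ m` and moreover `v ≤ q ++ m` for every nonempty proper suffix `q` of `i`,
then every shuffle of `i ++ m` and `v` is dominated by `i ++ t` for some shuffle `t`
of `m` and `v`. -/
lemma take_first : ∀ (i : List α), ∀ {m v s : List α}, v ≤ i ++ m →
    (∀ q : List α, q ≠ [] → q ≠ i → q <:+ i → v ≤ q ++ m) →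
    IsShuffle (i ++ m) v s → ∃ t, IsShuffle m v t ∧ s ≤ i ++ t := by
  intro i
  induction i with
  | nil => exact fun {m v s} _ _ hs => ⟨s, hs, le_refl _⟩
  | cons a i' ih =>
    intro m v s hvu hH hs
    rw [List.cons_append] at hs hvu
    obtain ⟨s₂, hs₂, hss₂⟩ := greedy hvu hs
    rcases eq_or_ne i' [] with rfl | hi'
    · exact ⟨s₂, hs₂, hss₂⟩
    · have hii : i' ≠ a :: i' := fun h => by
        have := congrArg List.length h; simp at this
      have hv' : v ≤ i' ++ m :=
        hH i' hi' hii (List.suffix_cons a i')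
      have hH' : ∀ q : List α, q ≠ [] → q ≠ i' → q <:+ i' → v ≤ q ++ m := by
        intro q hq hqi hqs
        refine hH q hq ?_ (hqs.trans (List.suffix_cons a i'))
        intro h
        have hlen := hqs.length_le
        rw [h] at hlen
        simp at hlen
      obtain ⟨t, ht, h2⟩ := ih hv' hH' hs₂
      exact ⟨t, ht, le_trans hss₂ (List.cons_le_cons a h2)⟩

/-- The core step: if `i₁` is Lyndon and `v ≤ i₁ ++ m`, then any `≤`-greatest shuffle of
`i₁ ++ m` and `v` begins with `i₁` taken from the left word. -/
lemma main_step {i₁ m v w : List α} (hL : IsLyndon i₁)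
    (hvu : v ≤ i₁ ++ m)
    (hshuf : IsShuffle (i₁ ++ m) v w)
    (hgreatest : ∀ w', IsShuffle (i₁ ++ m) v w' → w' ≤ w) :
    ∃ t, IsShuffle m v t ∧ w = i₁ ++ t := by
  have hH : ∀ q : List α, q ≠ [] → q ≠ i₁ → q <:+ i₁ → v ≤ q ++ m := by
    intro q hq hqi hqs
    have hlt : i₁ < q := hL.2 q hq hqi hqs
    have hlen : q.length < i₁.length :=
      lt_of_le_of_ne hqs.length_le (fun h => hqi (hqs.eq_of_length h))
    have hnp : ¬ i₁ <+: q := fun hp => absurd hp.length_le (not_le.mpr hlen)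
    exact le_trans hvu (le_of_lt (append_lt_append hlt hnp m m))
  obtain ⟨t, ht, hwt⟩ := take_first i₁ hvu hH hshuf
  have : i₁ ++ t ≤ w := hgreatest _ (shuffle_prepend i₁ ht)
  exact ⟨t, ht, le_antisymm hwt this⟩

end Stmt4Aux

/-- if each of `i₁` and `j₁` contains at most two occurrences of its first
letter, then the lexicographically greatest shuffle `w` of `μ = i₁ ⋯ i_r` and `ν = j₁ ⋯ j_s`
is either of the form `i₁ ++ (shuffle of i₂ ⋯ i_r and ν)` or of the form
`j₁ ++ (shuffle of μ and j₂ ⋯ j_s)`. -/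
theorem stmt4 {α : Type*} [LinearOrder α]
    (i₁ : List α) (itl : List (List α)) (j₁ : List α) (jtl : List (List α))
    (hLI : ∀ u ∈ i₁ :: itl, IsLyndon u)
    (hLJ : ∀ u ∈ j₁ :: jtl, IsLyndon u)
    (hdecI : List.Chain' (fun u v : List α => v ≤ u) (i₁ :: itl))
    (hdecJ : List.Chain' (fun u v : List α => v ≤ u) (j₁ :: jtl))
    (hi : i₁ ≠ []) (hj : j₁ ≠ [])
    (hcounti : List.count (i₁.head hi) i₁ ≤ 2)
    (hcountj : List.count (j₁.head hj) j₁ ≤ 2)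
    (w : List α)
    (hshuf : IsShuffle ((i₁ :: itl).flatten) ((j₁ :: jtl).flatten) w)
    (hgreatest : ∀ w', IsShuffle ((i₁ :: itl).flatten) ((j₁ :: jtl).flatten) w' → w' ≤ w) :
    (∃ w', IsShuffle itl.flatten ((j₁ :: jtl).flatten) w' ∧ w = i₁ ++ w') ∨
    (∃ w'', IsShuffle ((i₁ :: itl).flatten) jtl.flatten w'' ∧ w = j₁ ++ w'') := by
  classical
  rcases le_total ((j₁ :: jtl).flatten) ((i₁ :: itl).flatten) with h | h
  · left
    rw [List.flatten_cons] at hshuf hgreatest h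
    obtain ⟨t, ht, hw⟩ := Stmt4Aux.main_step (hLI i₁ (List.mem_cons_self)) h hshuf hgreatest
    exact ⟨t, ht, hw⟩
  · right
    have hshuf' := Stmt4Aux.shuffle_swap hshuf
    rw [List.flatten_cons] at hshuf' h
    have hgr' : ∀ w', IsShuffle (j₁ ++ jtl.flatten) ((i₁ :: itl).flatten) w' → w' ≤ w := by
      intro w' hw'
      exact hgreatest w' (Stmt4Aux.shuffle_swap (by rw [List.flatten_cons]; exact hw'))
    obtain ⟨t, ht, hw⟩ := Stmt4Aux.main_step (hLJ j₁ (List.mem_cons_self)) h hshuf' hgr'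
    exact ⟨t, Stmt4Aux.shuffle_swap ht, hw⟩
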